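/- The discrete fair-exchange game admits a globally Pareto-undominated pure Nash equilibrium: if every agent's benefit function b_i is continuous, nondecreasing, and concave on [0, ∞) with the vanishing-marginal-value condition, and every cost c_i is positive, then there exists an integer collection profile X* ∈ ℕ^n that is a pure Nash equilibrium of the discrete game and such that no integer profile X' ∈ ℕ^n satisfies U_i(X') ≥ U_i(X*) for all agents i and U_j(X') > U_j(X*) for some agent j. -/

import Mathlib

open Finset

/-- Agent `i`'s total accessible data under discrete fair exchange. -/
def totalD {n : ℕ} (X : Fin n → ℕ) (i : Fin n) : ℕ :=
  X i + ∑ j ∈ univ.filter (fun j => j ≠ i), min (X i) (X j)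

/-- Agent `i`'s utility in the discrete fair-exchange game. -/
noncomputable def UD {n : ℕ} (b : Fin n → ℝ → ℝ) (c : Fin n → ℝ)
    (X : Fin n → ℕ) (i : Fin n) : ℝ :=
  b i (totalD X i : ℝ) - c i * (X i : ℝ)

/-- `X` is a pure Nash equilibrium of the discrete fair-exchange game. -/
def IsNED {n : ℕ} (b : Fin n → ℝ → ℝ) (c : Fin n → ℝ) (X : Fin n → ℕ) : Prop :=
  ∀ i, ∀ m : ℕ, UD b c (Function.update X i m) i ≤ UD b c X i


section AuxHelpers

variable {f : ℝ → ℝ}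

lemma conc_step (hf : ConcaveOn ℝ (Set.Ici 0) f) {t t' : ℝ}
    (h0 : 0 ≤ t) (h : t ≤ t') : f (t' + 1) - f t' ≤ f (t + 1) - f t := by
  rcases eq_or_lt_of_le h with rfl | hlt
  · exact le_refl _
  · set d := t' - t with hd
    have hd1 : 0 < d := by simp [hd]; linarith
    have hden : (0:ℝ) < d + 1 := by linarith
    have ht' : (0:ℝ) ≤ t' := le_trans h0 h
    set a : ℝ := d / (d + 1) with ha
    set e : ℝ := 1 / (d + 1) with he
    have hA : 0 ≤ a := by positivity
    have hE : 0 ≤ e := by positivity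
    have hab : a + e = 1 := by rw [ha, he]; field_simp
    have hmem1 : t ∈ Set.Ici (0:ℝ) := h0
    have hmem2 : t' + 1 ∈ Set.Ici (0:ℝ) := by simp; linarith
    have h1 := hf.2 hmem1 hmem2 hA hE hab
    have h2 := hf.2 hmem1 hmem2 hE hA (by linarith)
    simp only [smul_eq_mul] at h1 h2
    have e1 : a * t + e * (t' + 1) = t + 1 := by
      rw [ha, he, hd]; field_simp; ring
    have e2 : e * t + a * (t' + 1) = t' := by
      rw [ha, he, hd]; field_simp; ring
    rw [e1] at h1
    rw [e2] at h2
    have key : a * f t + e * f (t' + 1) + (e * f t + a * f (t' + 1))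
        = f t + f (t' + 1) := by linear_combination (f t + f (t' + 1)) * hab
    linarith


lemma delta_anti (hf : ConcaveOn ℝ (Set.Ici 0) f) {t t' : ℕ} (h : t ≤ t') :
    f ((t' + 1 : ℕ) : ℝ) - f ((t' : ℕ) : ℝ) ≤ f ((t + 1 : ℕ) : ℝ) - f ((t : ℕ) : ℝ) := by
  have := conc_step hf (t := (t : ℝ)) (t' := (t' : ℝ)) (by positivity) (by exact_mod_cast h)
  push_cast
  convert this using 2 <;> push_cast <;> ring

lemma delta_nonneg (hm : MonotoneOn f (Set.Ici 0)) (t : ℕ) :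
    0 ≤ f ((t + 1 : ℕ) : ℝ) - f ((t : ℕ) : ℝ) := by
  have := hm (Set.mem_Ici.2 (by positivity : (0:ℝ) ≤ (t:ℝ)))
    (Set.mem_Ici.2 (by positivity : (0:ℝ) ≤ ((t+1 : ℕ):ℝ))) (by push_cast; linarith)
  linarith

lemma bmono_nat (hm : MonotoneOn f (Set.Ici 0)) {t t' : ℕ} (h : t ≤ t') :
    f ((t : ℕ) : ℝ) ≤ f ((t' : ℕ) : ℝ) :=
  hm (Set.mem_Ici.2 (by positivity)) (Set.mem_Ici.2 (by positivity)) (by exact_mod_cast h)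

lemma tele (f : ℝ → ℝ) (T s : ℕ) :
    f ((T + s : ℕ) : ℝ) - f ((T : ℕ) : ℝ)
      = ∑ j ∈ range s, (f ((T + j + 1 : ℕ) : ℝ) - f ((T + j : ℕ) : ℝ)) := by
  induction s with
  | zero => simp
  | succ s ih =>
      rw [Finset.sum_range_succ, ← ih]
      have : T + (s + 1) = T + s + 1 := by ring
      rw [this]
      ring

lemma gmono (hm : MonotoneOn f (Set.Ici 0)) (hf : ConcaveOn ℝ (Set.Ici 0) f)
    {T T' s s' : ℕ} (hT : T ≤ T') (hs : s' ≤ s) :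
    f ((T' + s' : ℕ) : ℝ) - f ((T' : ℕ) : ℝ) ≤ f ((T + s : ℕ) : ℝ) - f ((T : ℕ) : ℝ) := by
  rw [tele, tele]
  calc ∑ j ∈ range s', (f ((T' + j + 1 : ℕ) : ℝ) - f ((T' + j : ℕ) : ℝ))
      ≤ ∑ j ∈ range s', (f ((T + j + 1 : ℕ) : ℝ) - f ((T + j : ℕ) : ℝ)) := by
        apply Finset.sum_le_sum
        intro j _
        exact delta_anti hf (by omega)
    _ ≤ ∑ j ∈ range s, (f ((T + j + 1 : ℕ) : ℝ) - f ((T + j : ℕ) : ℝ)) := by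
        apply Finset.sum_le_sum_of_subset_of_nonneg
          (Finset.range_subset_range.2 hs)
        intro j _ _
        exact delta_nonneg hm _

lemma gchunk (hm : MonotoneOn f (Set.Ici 0)) (hf : ConcaveOn ℝ (Set.Ici 0) f)
    (T s r : ℕ) :
    f ((T + r * s : ℕ) : ℝ) - f ((T : ℕ) : ℝ)
      ≤ (r : ℝ) * (f ((T + s : ℕ) : ℝ) - f ((T : ℕ) : ℝ)) := by
  induction r with
  | zero => simp
  | succ r ih =>
      have h1 : f ((T + (r+1) * s : ℕ) : ℝ) - f ((T + r * s : ℕ) : ℝ)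
          ≤ f ((T + s : ℕ) : ℝ) - f ((T : ℕ) : ℝ) := by
        have : T + (r+1) * s = (T + r * s) + s := by ring
        rw [this]
        exact gmono hm hf (by omega) (le_refl s)
      push_cast
      push_cast at ih h1
      linarith


end AuxHelpers

lemma filter_range_min (m y : ℕ) :
    (range m).filter (fun l => l + 1 ≤ y) = range (min m y) := by
  ext l
  simp only [mem_filter, mem_range, lt_min_iff]
  omega

lemma sum_min_eq {n : ℕ} (X : Fin n → ℕ) (m : ℕ) :
    ∑ j, min m (X j) = ∑ l ∈ range m, (univ.filter (fun j : Fin n => l + 1 ≤ X j)).card := by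
  have : ∀ j : Fin n, min m (X j) = ((range m).filter (fun l => l + 1 ≤ X j)).card := by
    intro j; rw [filter_range_min, card_range]
  simp only [this, card_eq_sum_ones, sum_filter]
  rw [Finset.sum_comm]

lemma totalD_eq_sum {n : ℕ} (X : Fin n → ℕ) (i : Fin n) :
    totalD X i = ∑ j, min (X i) (X j) := by
  unfold totalD
  rw [Finset.filter_ne', ← Finset.add_sum_erase _ _ (mem_univ i), min_self]

lemma totalD_update {n : ℕ} (X : Fin n → ℕ) (i : Fin n) (m : ℕ) :
    totalD (Function.update X i m) i + min m (X i) = m + ∑ j, min m (X j) := by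
  unfold totalD
  rw [Finset.filter_ne']
  have h1 : Function.update X i m i = m := Function.update_self i m X
  have h2 : ∑ j ∈ univ.erase i, min m (Function.update X i m j)
      = ∑ j ∈ univ.erase i, min m (X j) := by
    apply Finset.sum_congr rfl
    intro j hj
    rw [Function.update_of_ne (Finset.ne_of_mem_erase hj)]
  rw [h1, h2, ← Finset.add_sum_erase _ (fun j => min m (X j)) (mem_univ i)]
  ring

section FE
variable {n : ℕ} (b : Fin n → ℝ → ℝ) (c : Fin n → ℝ)

open Classical in
noncomputable def passFE (A : Finset (Fin n)) (T s : ℕ) : Finset (Fin n) :=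
  A.filter (fun i => c i ≤ b i ((T + s : ℕ) : ℝ) - b i ((T : ℕ) : ℝ))

noncomputable def sstepFE (A : Finset (Fin n)) (T : ℕ) : ℕ :=
  Nat.findGreatest (fun s => s ≤ (passFE b c A T s).card) A.card

noncomputable def iterFE : ℕ → Finset (Fin n) × ℕ
  | 0 => (Finset.univ, 0)
  | k+1 =>
      let p := iterFE k
      (passFE b c p.1 p.2 (sstepFE b c p.1 p.2), p.2 + sstepFE b c p.1 p.2)

noncomputable def AFE (k : ℕ) : Finset (Fin n) := (iterFE b c k).1
noncomputable def TFE (k : ℕ) : ℕ := (iterFE b c k).2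

lemma AFE_zero : AFE b c 0 = (univ : Finset (Fin n)) := rfl
lemma TFE_zero : TFE b c 0 = 0 := rfl

lemma AFE_succ (k : ℕ) :
    AFE b c (k+1) = passFE b c (AFE b c k) (TFE b c k) (sstepFE b c (AFE b c k) (TFE b c k)) := rfl

lemma TFE_succ (k : ℕ) :
    TFE b c (k+1) = TFE b c k + sstepFE b c (AFE b c k) (TFE b c k) := rfl

lemma mem_passFE {A : Finset (Fin n)} {T s : ℕ} {i : Fin n} :
    i ∈ passFE b c A T s ↔ i ∈ A ∧ c i ≤ b i ((T + s : ℕ) : ℝ) - b i ((T : ℕ) : ℝ) := by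
  classical
  simp [passFE]

lemma passFE_subset (A : Finset (Fin n)) (T s : ℕ) : passFE b c A T s ⊆ A :=
  Finset.filter_subset _ _

lemma passFE_mono (hbm : ∀ i, MonotoneOn (b i) (Set.Ici 0)) (A : Finset (Fin n)) (T : ℕ)
    {s s' : ℕ} (h : s ≤ s') : passFE b c A T s ⊆ passFE b c A T s' := by
  intro i hi
  rw [mem_passFE] at hi ⊢
  refine ⟨hi.1, hi.2.trans ?_⟩
  have : b i ((T + s : ℕ) : ℝ) ≤ b i ((T + s' : ℕ) : ℝ) := by
    apply hbm i (Set.mem_Ici.2 (by positivity)) (Set.mem_Ici.2 (by positivity))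
    exact_mod_cast by omega
  linarith

lemma sstep_spec (A : Finset (Fin n)) (T : ℕ) :
    sstepFE b c A T ≤ (passFE b c A T (sstepFE b c A T)).card := by
  have h := Nat.findGreatest_spec (P := fun s => s ≤ (passFE b c A T s).card)
    (m := 0) (Nat.zero_le A.card) (by simp)
  simpa [sstepFE] using h

lemma sstep_max (A : Finset (Fin n)) (T : ℕ) {m : ℕ} (hm : m ≤ A.card)
    (h : m ≤ (passFE b c A T m).card) : m ≤ sstepFE b c A T := by
  simpa [sstepFE] using
    Nat.le_findGreatest (P := fun s => s ≤ (passFE b c A T s).card) hm h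

lemma card_AFE_succ (hbm : ∀ i, MonotoneOn (b i) (Set.Ici 0)) (k : ℕ) :
    (AFE b c (k+1)).card = sstepFE b c (AFE b c k) (TFE b c k) := by
  have h1 := sstep_spec b c (AFE b c k) (TFE b c k)
  have h2 : (passFE b c (AFE b c k) (TFE b c k) (sstepFE b c (AFE b c k) (TFE b c k))).card
      ≤ sstepFE b c (AFE b c k) (TFE b c k) := by
    apply sstep_max
    · exact Finset.card_le_card (passFE_subset b c _ _ _)
    · exact Finset.card_le_card (passFE_mono b c hbm _ _ h1)
  rw [AFE_succ]
  omega

lemma AFE_antitone (k l : ℕ) (h : k ≤ l) : AFE b c l ⊆ AFE b c k := by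
  induction l with
  | zero => simp_all
  | succ l ih =>
      by_cases hk : k = l + 1
      · subst hk; exact subset_rfl
      · exact (passFE_subset b c _ _ _).trans (ih (by omega))

/-- P1 -/
lemma P1FE {k : ℕ} {i : Fin n} (hi : i ∈ AFE b c (k+1)) :
    c i ≤ b i ((TFE b c (k+1) : ℕ) : ℝ) - b i ((TFE b c k : ℕ) : ℝ) := by
  rw [AFE_succ, mem_passFE] at hi
  rw [TFE_succ]
  exact hi.2

/-- P2 -/
lemma P2FE (hbm : ∀ i, MonotoneOn (b i) (Set.Ici 0)) {k : ℕ} {i : Fin n}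
    (hik : i ∈ AFE b c k) (hik1 : i ∉ AFE b c (k+1)) :
    b i ((TFE b c k + (sstepFE b c (AFE b c k) (TFE b c k) + 1) : ℕ) : ℝ)
      - b i ((TFE b c k : ℕ) : ℝ) < c i := by
  by_contra hcon
  push_neg at hcon
  have hisub : insert i (AFE b c (k+1))
      ⊆ passFE b c (AFE b c k) (TFE b c k) (sstepFE b c (AFE b c k) (TFE b c k) + 1) := by
    intro j hj
    rcases Finset.mem_insert.1 hj with rfl | hj'
    · rw [mem_passFE]
      exact ⟨hik, hcon⟩
    · exact passFE_mono b c hbm _ _ (by omega) ((AFE_succ b c k ▸ hj'))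
  have hcard : sstepFE b c (AFE b c k) (TFE b c k) + 1
      ≤ (passFE b c (AFE b c k) (TFE b c k) (sstepFE b c (AFE b c k) (TFE b c k) + 1)).card := by
    have h := Finset.card_le_card hisub
    rw [Finset.card_insert_of_notMem hik1, card_AFE_succ b c hbm k] at h
    omega
  have hbound : sstepFE b c (AFE b c k) (TFE b c k) + 1 ≤ (AFE b c k).card := by
    have h1 : AFE b c (k+1) ⊂ AFE b c k :=
      Finset.ssubset_iff_of_subset (passFE_subset b c _ _ _) |>.2 ⟨i, hik, hik1⟩
    have h2 := Finset.card_lt_card h1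
    rw [card_AFE_succ b c hbm k] at h2
    omega
  have := sstep_max b c (AFE b c k) (TFE b c k) hbound hcard
  omega

lemma TFE_eq_sum (hbm : ∀ i, MonotoneOn (b i) (Set.Ici 0)) (k : ℕ) :
    TFE b c k = ∑ l ∈ range k, (AFE b c (l+1)).card := by
  induction k with
  | zero => simp [TFE_zero]
  | succ k ih =>
      rw [Finset.sum_range_succ, ← ih, TFE_succ, card_AFE_succ b c hbm]

lemma TFE_ge (hbm : ∀ i, MonotoneOn (b i) (Set.Ici 0)) (k : ℕ)
    (h : (AFE b c k).Nonempty) : k ≤ TFE b c k := by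
  induction k with
  | zero => omega
  | succ k ih =>
      have h1 : (AFE b c (k+1)).card ≥ 1 := Finset.card_pos.2 h
      have h2 : (AFE b c k).Nonempty := by
        obtain ⟨i, hi⟩ := h
        exact ⟨i, AFE_antitone b c k (k+1) (by omega) hi⟩
      have := ih h2
      have h3 := card_AFE_succ b c hbm k
      rw [TFE_succ]
      omega

lemma AFE_empty (hn : 1 ≤ n) (hc : ∀ i, 0 < c i)
    (hbm : ∀ i, MonotoneOn (b i) (Set.Ici 0))
    (hvanish : ∀ i, Filter.Tendsto (fun t : ℝ => b i (t + 1) - b i t)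
      Filter.atTop (nhds 0)) :
    ∃ K, AFE b c K = ∅ := by
  have npos : (0:ℝ) < (n:ℝ) := by exact_mod_cast hn
  have hN : ∀ i : Fin n, ∃ N : ℕ, ∀ k, N ≤ k →
      b i ((k + 1 : ℕ) : ℝ) - b i ((k : ℕ) : ℝ) < c i / n := by
    intro i
    have h := (hvanish i).comp (tendsto_natCast_atTop_atTop (R := ℝ))
    have ev := h.eventually_lt_const (div_pos (hc i) npos)
    obtain ⟨N, hNs⟩ := Filter.eventually_atTop.1 ev
    refine ⟨N, fun k hk => ?_⟩
    have := hNs k hk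
    simp only [Function.comp] at this
    convert this using 3
    · rfl
    · norm_num
  choose N hNs using hN
  set K0 := Finset.univ.sup N with hK0
  refine ⟨K0 + 1, ?_⟩
  by_contra hne
  obtain ⟨i, hi⟩ := Finset.nonempty_iff_ne_empty.2 hne
  have hK0nonempty : (AFE b c K0).Nonempty :=
    ⟨i, AFE_antitone b c K0 (K0+1) (by omega) hi⟩
  have hTge : K0 ≤ TFE b c K0 := TFE_ge b c hbm K0 hK0nonempty
  have hcard := card_AFE_succ b c hbm K0
  have hs1 : 1 ≤ sstepFE b c (AFE b c K0) (TFE b c K0) := by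
    rw [← hcard]
    exact Finset.card_pos.2 ⟨i, hi⟩
  have hsn : sstepFE b c (AFE b c K0) (TFE b c K0) ≤ n := by
    rw [← hcard]
    have := Finset.card_le_card (Finset.subset_univ (AFE b c (K0+1)))
    simpa using this
  rw [AFE_succ, mem_passFE] at hi
  set T := TFE b c K0 with hT
  set s := sstepFE b c (AFE b c K0) (TFE b c K0) with hss
  have htel := tele (b i) T s
  have hterm : ∀ j ∈ range s,
      b i ((T + j + 1 : ℕ) : ℝ) - b i ((T + j : ℕ) : ℝ) < c i / n := by
    intro j _
    apply hNs i (T + j)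
    have : N i ≤ K0 := Finset.le_sup (Finset.mem_univ i)
    omega
  have hsum : b i ((T + s : ℕ) : ℝ) - b i ((T : ℕ) : ℝ) < (s : ℝ) * (c i / n) := by
    rw [htel]
    calc ∑ j ∈ range s, (b i ((T + j + 1 : ℕ) : ℝ) - b i ((T + j : ℕ) : ℝ))
        < ∑ _j ∈ range s, c i / n :=
          Finset.sum_lt_sum_of_nonempty (by simp; omega) hterm
      _ = (s : ℝ) * (c i / n) := by
          rw [Finset.sum_const, Finset.card_range, nsmul_eq_mul]
  have hle : (s : ℝ) * (c i / n) ≤ c i := by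
    have h1 : (s : ℝ) ≤ (n : ℝ) := by exact_mod_cast hsn
    have h2 : (0:ℝ) ≤ c i / n := le_of_lt (div_pos (hc i) npos)
    calc (s : ℝ) * (c i / n) ≤ (n : ℝ) * (c i / n) := mul_le_mul_of_nonneg_right h1 h2
      _ = c i := by field_simp
  have := hi.2
  linarith

noncomputable def XsFE (K : ℕ) : Fin n → ℕ :=
  fun i => ((range K).filter (fun l => i ∈ AFE b c (l+1))).card

variable {K : ℕ}

lemma AFE_empty_ge (hK : AFE b c K = ∅) {k : ℕ} (h : K ≤ k) : AFE b c k = ∅ :=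
  Finset.subset_empty.1 (hK ▸ AFE_antitone b c K k h)

lemma mem_AFE_iff (hK : AFE b c K = ∅) {i : Fin n} {k : ℕ} (hk : 1 ≤ k) :
    i ∈ AFE b c k ↔ k ≤ XsFE b c K i := by
  constructor
  · intro h
    have hkK : k < K := by
      by_contra hge
      push_neg at hge
      rw [AFE_empty_ge b c hK hge] at h
      exact absurd h (Finset.notMem_empty i)
    have hsub : range k ⊆ (range K).filter (fun l => i ∈ AFE b c (l+1)) := by
      intro l hl
      rw [mem_range] at hl
      rw [mem_filter, mem_range]
      exact ⟨by omega, AFE_antitone b c (l+1) k (by omega) h⟩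
    have hcard := Finset.card_le_card hsub
    rw [card_range] at hcard
    exact hcard
  · intro h
    by_contra hnot
    have hsub : (range K).filter (fun l => i ∈ AFE b c (l+1)) ⊆ range (k-1) := by
      intro l hl
      rw [mem_filter] at hl
      rw [mem_range]
      by_contra hge
      push_neg at hge
      exact hnot (AFE_antitone b c k (l+1) (by omega) hl.2)
    have hcard := Finset.card_le_card hsub
    rw [card_range] at hcard
    have : XsFE b c K i ≤ k - 1 := hcard
    omega

lemma mem_AFE_Xs (hK : AFE b c K = ∅) (i : Fin n) : i ∈ AFE b c (XsFE b c K i) := by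
  rcases Nat.eq_zero_or_pos (XsFE b c K i) with h | h
  · rw [h, AFE_zero]; exact mem_univ i
  · exact (mem_AFE_iff b c hK h).2 (le_refl _)

lemma not_mem_AFE_Xs_succ (hK : AFE b c K = ∅) (i : Fin n) :
    i ∉ AFE b c (XsFE b c K i + 1) := by
  intro h
  have := (mem_AFE_iff b c hK (by omega)).1 h
  omega

lemma Nlev_eq (hK : AFE b c K = ∅) {k : ℕ} (hk : 1 ≤ k) :
    univ.filter (fun j => k ≤ XsFE b c K j) = AFE b c k := by
  ext j
  rw [mem_filter]
  constructor
  · intro h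
    exact (mem_AFE_iff b c hK hk).2 h.2
  · intro h
    exact ⟨mem_univ j, (mem_AFE_iff b c hK hk).1 h⟩

lemma sum_min_TFE (hbm : ∀ i, MonotoneOn (b i) (Set.Ici 0)) (hK : AFE b c K = ∅) (m : ℕ) :
    ∑ j, min m (XsFE b c K j) = TFE b c m := by
  rw [sum_min_eq, TFE_eq_sum b c hbm]
  apply Finset.sum_congr rfl
  intro l _
  rw [Nlev_eq b c hK (by omega)]

lemma totalD_XsFE (hbm : ∀ i, MonotoneOn (b i) (Set.Ici 0)) (hK : AFE b c K = ∅) (i : Fin n) :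
    totalD (XsFE b c K) i = TFE b c (XsFE b c K i) := by
  rw [totalD_eq_sum, sum_min_TFE b c hbm hK]

lemma down_le (hK : AFE b c K = ∅) (i : Fin n) {m x : ℕ} (hmx : m ≤ x)
    (hx : x ≤ XsFE b c K i) :
    b i ((TFE b c m : ℕ) : ℝ) - c i * m ≤ b i ((TFE b c x : ℕ) : ℝ) - c i * x := by
  induction x, hmx using Nat.le_induction with
  | base => exact le_refl _
  | succ x hmx ih =>
      have hmem : i ∈ AFE b c (x+1) := (mem_AFE_iff b c hK (by omega)).2 hx
      have hP1 := P1FE b c hmem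
      have := ih (by omega)
      push_cast at this hP1 ⊢
      linarith

lemma TFE_le_interval (hbm : ∀ i, MonotoneOn (b i) (Set.Ici 0)) {x m : ℕ} (h : x ≤ m) :
    TFE b c m ≤ TFE b c x + (m - x) * (AFE b c (x+1)).card := by
  rw [TFE_eq_sum b c hbm, TFE_eq_sum b c hbm]
  have hsplit : ∑ l ∈ range x, (AFE b c (l+1)).card
      + ∑ l ∈ Ico x m, (AFE b c (l+1)).card = ∑ l ∈ range m, (AFE b c (l+1)).card := by
    rw [range_eq_Ico, range_eq_Ico]
    exact Finset.sum_Ico_consecutive _ (by omega) h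
  have hbound : ∑ l ∈ Ico x m, (AFE b c (l+1)).card ≤ (m - x) * (AFE b c (x+1)).card := by
    calc ∑ l ∈ Ico x m, (AFE b c (l+1)).card
        ≤ ∑ _l ∈ Ico x m, (AFE b c (x+1)).card := by
          apply Finset.sum_le_sum
          intro l hl
          rw [mem_Ico] at hl
          exact Finset.card_le_card (AFE_antitone b c (x+1) (l+1) (by omega))
      _ = (m - x) * (AFE b c (x+1)).card := by
          rw [Finset.sum_const, Nat.card_Ico, smul_eq_mul]
  omega

lemma UD_XsFE (hbm : ∀ i, MonotoneOn (b i) (Set.Ici 0)) (hK : AFE b c K = ∅) (i : Fin n) :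
    UD b c (XsFE b c K) i
      = b i ((TFE b c (XsFE b c K i) : ℕ) : ℝ) - c i * (XsFE b c K i : ℝ) := by
  rw [UD, totalD_XsFE b c hbm hK]

lemma NE_XsFE (hbm : ∀ i, MonotoneOn (b i) (Set.Ici 0))
    (hbconc : ∀ i, ConcaveOn ℝ (Set.Ici 0) (b i))
    (hK : AFE b c K = ∅) : IsNED b c (XsFE b c K) := by
  intro i m
  set x := XsFE b c K i with hx
  have htd := totalD_update (XsFE b c K) i m
  rw [sum_min_TFE b c hbm hK] at htd
  rw [UD_XsFE b c hbm hK i, UD]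
  simp only [← hx]
  by_cases hmx : m ≤ x
  · have htd2 : totalD (Function.update (XsFE b c K) i m) i = TFE b c m := by
      have : min m x = m := by omega
      rw [← hx] at htd
      omega
    rw [Function.update_self, htd2]
    exact down_le b c hK i hmx (le_refl _)
  · push_neg at hmx
    have hmin : min m x = x := by omega
    rw [← hx, hmin] at htd
    set r := m - x with hr
    have hr1 : 1 ≤ r := by omega
    set a := (AFE b c (x+1)).card with ha
    have hTm : TFE b c m ≤ TFE b c x + r * a := TFE_le_interval b c hbm (by omega)
    have hfin : totalD (Function.update (XsFE b c K) i m) i ≤ TFE b c x + r * (a + 1) := by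
      have htd2 : totalD (Function.update (XsFE b c K) i m) i = TFE b c m + r := by omega
      rw [htd2]
      calc TFE b c m + r ≤ TFE b c x + r * a + r := by omega
        _ = TFE b c x + r * (a + 1) := by ring
    have hb1 : b i ((totalD (Function.update (XsFE b c K) i m) i : ℕ) : ℝ)
        ≤ b i ((TFE b c x + r * (a+1) : ℕ) : ℝ) := bmono_nat (hbm i) hfin
    have hb2 := gchunk (hbm i) (hbconc i) (TFE b c x) (a+1) r
    have hb3 : b i ((TFE b c x + (a + 1) : ℕ) : ℝ) - b i ((TFE b c x : ℕ) : ℝ) < c i := by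
      have hp2 := P2FE b c hbm (mem_AFE_Xs b c hK i) (not_mem_AFE_Xs_succ b c hK i)
      rw [← card_AFE_succ b c hbm] at hp2
      exact hp2
    have hb4 : (r : ℝ) * (b i ((TFE b c x + (a+1) : ℕ) : ℝ) - b i ((TFE b c x : ℕ) : ℝ))
        ≤ (r : ℝ) * c i := by
      apply mul_le_mul_of_nonneg_left (le_of_lt hb3) (by positivity)
    have hmr : (m : ℝ) = (x : ℝ) + (r : ℝ) := by
      have : m = x + r := by omega
      exact_mod_cast congrArg (Nat.cast : ℕ → ℝ) this
    have hcm : c i * (m:ℝ) = c i * (x:ℝ) + c i * (r:ℝ) := by rw [hmr]; ring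
    rw [Function.update_self]
    linarith

lemma pareto_XsFE (hbm : ∀ i, MonotoneOn (b i) (Set.Ici 0))
    (hbconc : ∀ i, ConcaveOn ℝ (Set.Ici 0) (b i))
    (hK : AFE b c K = ∅) :
    ¬ ∃ Z : Fin n → ℕ,
      (∀ i, UD b c (XsFE b c K) i ≤ UD b c Z i) ∧
      (∃ j, UD b c (XsFE b c K) j < UD b c Z j) := by
  rintro ⟨Z, hdom, j, hj⟩
  set M : ℕ → ℕ := fun k => (univ.filter (fun j' => k ≤ Z j')).card with hM
  have hManti : ∀ {k l : ℕ}, k ≤ l → M l ≤ M k := by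
    intro k l h
    apply Finset.card_le_card
    intro j' hj'
    rw [mem_filter] at hj' ⊢
    exact ⟨hj'.1, by omega⟩
  have hZtot : ∀ i, totalD Z i = ∑ l ∈ range (Z i), M (l+1) := by
    intro i
    rw [totalD_eq_sum, sum_min_eq]
  have claim : ∀ k : ℕ, univ.filter (fun i => k+1 ≤ Z i) ⊆ AFE b c (k+1) := by
    intro k
    induction k using Nat.strong_induction_on with
    | _ k IH =>
    have hMle : ∀ l, l < k → M (l+1) ≤ (AFE b c (l+1)).card := by
      intro l hl
      exact Finset.card_le_card (IH l hl)
    have key : ∀ i, k+1 ≤ Z i → XsFE b c K i ≤ k →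
        c i ≤ b i ((TFE b c (XsFE b c K i) + M (XsFE b c K i + 1) : ℕ) : ℝ)
          - b i ((TFE b c (XsFE b c K i) : ℕ) : ℝ) := by
      intro i hZi hXsi
      set x := XsFE b c K i with hx
      set r := Z i - x with hr
      have hr1 : 1 ≤ r := by omega
      have hsplit : ∑ l ∈ range (Z i), M (l+1)
          = ∑ l ∈ range x, M (l+1) + ∑ l ∈ Ico x (Z i), M (l+1) := by
        rw [range_eq_Ico, range_eq_Ico]
        exact (Finset.sum_Ico_consecutive _ (Nat.zero_le x) (by omega)).symm
      have h1 : ∑ l ∈ range x, M (l+1) ≤ TFE b c x := by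
        rw [TFE_eq_sum b c hbm]
        apply Finset.sum_le_sum
        intro l hl
        rw [mem_range] at hl
        exact hMle l (by omega)
      have h2 : ∑ l ∈ Ico x (Z i), M (l+1) ≤ r * M (x+1) := by
        calc ∑ l ∈ Ico x (Z i), M (l+1)
            ≤ ∑ _l ∈ Ico x (Z i), M (x+1) := by
              apply Finset.sum_le_sum
              intro l hl
              rw [mem_Ico] at hl
              exact hManti (by omega)
          _ = r * M (x+1) := by
              rw [Finset.sum_const, Nat.card_Ico, smul_eq_mul, hr]
      have htZ : totalD Z i ≤ TFE b c x + r * M (x+1) := by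
        rw [hZtot i, hsplit]
        exact Nat.add_le_add h1 h2
      have hb1 : b i ((totalD Z i : ℕ) : ℝ)
          ≤ b i ((TFE b c x + r * M (x+1) : ℕ) : ℝ) := bmono_nat (hbm i) htZ
      have hb2 := gchunk (hbm i) (hbconc i) (TFE b c x) (M (x+1)) r
      have hdomi := hdom i
      rw [UD_XsFE b c hbm hK i, UD] at hdomi
      simp only [← hx] at hdomi
      have hZr : (Z i : ℝ) = (x : ℝ) + (r : ℝ) := by
        have h3 : Z i = x + r := by omega
        exact_mod_cast congrArg (Nat.cast : ℕ → ℝ) h3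
      have hcz : c i * (Z i : ℝ) = c i * (x:ℝ) + c i * (r:ℝ) := by rw [hZr]; ring
      have hrpos : (0:ℝ) < (r:ℝ) := by exact_mod_cast hr1
      have hg : c i * (r:ℝ)
          ≤ (b i ((TFE b c x + M (x+1) : ℕ) : ℝ) - b i ((TFE b c x : ℕ) : ℝ)) * (r:ℝ) := by
        have := mul_comm (r:ℝ) (b i ((TFE b c x + M (x+1) : ℕ) : ℝ) - b i ((TFE b c x : ℕ) : ℝ))
        linarith
      exact le_of_mul_le_mul_right hg hrpos
    have small : ∀ i, k+1 ≤ Z i → XsFE b c K i < k → False := by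
      intro i hZi hXsi
      have hkey := key i hZi (by omega)
      have hMle' : M (XsFE b c K i + 1) ≤ (AFE b c (XsFE b c K i + 1)).card :=
        hMle _ (by omega)
      have hp2 := P2FE b c hbm (mem_AFE_Xs b c hK i) (not_mem_AFE_Xs_succ b c hK i)
      rw [← card_AFE_succ b c hbm] at hp2
      have hmono := gmono (hbm i) (hbconc i) (le_refl (TFE b c (XsFE b c K i)))
        (show M (XsFE b c K i + 1) ≤ (AFE b c (XsFE b c K i + 1)).card + 1 by omega)
      linarith
    intro i hi
    rw [mem_filter] at hi
    by_cases hx1 : k+1 ≤ XsFE b c K i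
    · exact (mem_AFE_iff b c hK (by omega)).2 hx1
    exfalso
    push_neg at hx1
    have hxk : XsFE b c K i = k := by
      by_cases h' : XsFE b c K i < k
      · exact (small i hi.2 h').elim
      · omega
    have hkey := key i hi.2 (by omega)
    rw [hxk] at hkey
    have hp2 := P2FE b c hbm (mem_AFE_Xs b c hK i) (not_mem_AFE_Xs_succ b c hK i)
    rw [← card_AFE_succ b c hbm, hxk] at hp2
    have hM2 : (AFE b c (k+1)).card + 2 ≤ M (k+1) := by
      by_contra h'
      push_neg at h'
      have hmono := gmono (hbm i) (hbconc i) (le_refl (TFE b c k))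
        (show M (k+1) ≤ (AFE b c (k+1)).card + 1 by omega)
      linarith
    have hsub : univ.filter (fun i' => k+1 ≤ Z i')
        ⊆ passFE b c (AFE b c k) (TFE b c k) (M (k+1)) := by
      intro i' hi'
      rw [mem_filter] at hi'
      have hAk : i' ∈ AFE b c k := by
        rcases Nat.eq_zero_or_pos k with hk0 | hk0
        · rw [hk0, AFE_zero]; exact mem_univ i'
        · obtain ⟨k', rfl⟩ : ∃ k', k = k' + 1 := ⟨k - 1, by omega⟩
          apply IH k' (by omega)
          rw [mem_filter]
          exact ⟨mem_univ i', by omega⟩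
      rw [mem_passFE]
      refine ⟨hAk, ?_⟩
      by_cases hx' : k+1 ≤ XsFE b c K i'
      · have hmem' : i' ∈ AFE b c (k+1) := (mem_AFE_iff b c hK (by omega)).2 hx'
        have hP1 := P1FE b c hmem'
        rw [TFE_succ, ← card_AFE_succ b c hbm k] at hP1
        have hmono := gmono (hbm i') (hbconc i') (le_refl (TFE b c k))
          (show (AFE b c (k+1)).card ≤ M (k+1) by omega)
        linarith
      · push_neg at hx'
        by_cases hlt : XsFE b c K i' < k
        · exact (small i' hi'.2 hlt).elim
        · have hxe : XsFE b c K i' = k := by omega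
          have hkey' := key i' hi'.2 (by omega)
          rw [hxe] at hkey'
          exact hkey'
    have hcard : M (k+1) ≤ (passFE b c (AFE b c k) (TFE b c k) (M (k+1))).card :=
      Finset.card_le_card hsub
    have hbound : M (k+1) ≤ (AFE b c k).card :=
      Finset.card_le_card (hsub.trans (passFE_subset b c _ _ _))
    have hfind := sstep_max b c (AFE b c k) (TFE b c k) hbound hcard
    rw [← card_AFE_succ b c hbm k] at hfind
    omega
  have hZle : ∀ i, Z i ≤ XsFE b c K i := by
    intro i
    rcases Nat.eq_zero_or_pos (Z i) with h | h
    · omega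
    · have hi : i ∈ univ.filter (fun i' => (Z i - 1) + 1 ≤ Z i') := by
        rw [mem_filter]
        exact ⟨mem_univ i, by omega⟩
      have hmem := claim (Z i - 1) hi
      have h2 : (Z i - 1) + 1 = Z i := by omega
      rw [h2] at hmem
      exact (mem_AFE_iff b c hK (by omega)).1 hmem
  have hUle : ∀ i, UD b c Z i ≤ UD b c (XsFE b c K) i := by
    intro i
    have h1 : totalD Z i ≤ TFE b c (Z i) := by
      rw [hZtot i, TFE_eq_sum b c hbm]
      apply Finset.sum_le_sum
      intro l _
      exact Finset.card_le_card (claim l)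
    have hb1 : b i ((totalD Z i : ℕ) : ℝ) ≤ b i ((TFE b c (Z i) : ℕ) : ℝ) :=
      bmono_nat (hbm i) h1
    have hdn := down_le b c hK i (hZle i) (le_refl (XsFE b c K i))
    rw [UD, UD_XsFE b c hbm hK i]
    linarith
  exact absurd hj (not_lt.2 (hUle j))

end FE

/-- The discrete fair-exchange game admits a globally Pareto-undominated pure Nash
equilibrium: there is an integer equilibrium profile `X*` such that no integer profile
Pareto-dominates it. -/
theorem discrete_exists_pareto_undominated_equilibrium (n : ℕ) (hn : 1 ≤ n)
    (b : Fin n → ℝ → ℝ) (c : Fin n → ℝ)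
    (hc : ∀ i, 0 < c i)
    (hbc : ∀ i, ContinuousOn (b i) (Set.Ici 0))
    (hbm : ∀ i, MonotoneOn (b i) (Set.Ici 0))
    (hbconc : ∀ i, ConcaveOn ℝ (Set.Ici 0) (b i))
    (hvanish : ∀ i, Filter.Tendsto (fun t : ℝ => b i (t + 1) - b i t)
      Filter.atTop (nhds 0)) :
    ∃ Xstar : Fin n → ℕ, IsNED b c Xstar ∧
      ¬ ∃ X' : Fin n → ℕ,
        (∀ i, UD b c Xstar i ≤ UD b c X' i) ∧
        (∃ j, UD b c Xstar j < UD b c X' j) := by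
  obtain ⟨K, hK⟩ := AFE_empty b c hn hc hbm hvanish
  exact ⟨XsFE b c K, NE_XsFE b c hbm hbconc hK, pareto_XsFE b c hbm hbconc hK⟩
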